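/- Suppose v ∈ C¹(ℝ²) satisfies ∫_{ℝ²} |∇v|^p dx < ∞ for some p ∈ (2,∞). Then sup_{R ≥ 1} R^{2-p} ∫_0^{2π} |v(R cos θ, R sin θ)|^p dθ < ∞. -/

import Mathlib

noncomputable section
open MeasureTheory Real Set

/-- The plane `ℝ²` with the Euclidean norm. -/
abbrev Plane := EuclideanSpace ℝ (Fin 2)

/-- The point of the plane with Cartesian coordinates `(a, b)`. -/
def pt (a b : ℝ) : Plane := WithLp.toLp 2 ![a, b]

lemma pt_smul (r a b : ℝ) : r • pt a b = pt (r * a) (r * b) := by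
  ext i; fin_cases i <;> rfl

lemma norm_pt_cos_sin (θ : ℝ) : ‖pt (Real.cos θ) (Real.sin θ)‖ = 1 := by
  rw [EuclideanSpace.norm_eq]
  have : ∑ i : Fin 2, ‖pt (Real.cos θ) (Real.sin θ) i‖ ^ 2 = 1 := by
    rw [Fin.sum_univ_two]
    simp only [pt, Matrix.cons_val_zero, Matrix.cons_val_one, Matrix.head_cons,
      Real.norm_eq_abs, sq_abs]
    exact Real.cos_sq_add_sin_sq θ
  rw [this, Real.sqrt_one]

lemma two_rpow_bound {p : ℝ} (hp : 1 ≤ p) {x y : ℝ} (hx : 0 ≤ x) (hy : 0 ≤ y) :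
    (x + y) ^ p ≤ 2 ^ (p - 1) * (x ^ p + y ^ p) := by
  have h := NNReal.rpow_add_le_mul_rpow_add_rpow x.toNNReal y.toNNReal hp
  have h' := (NNReal.coe_le_coe.2 h)
  push_cast [NNReal.coe_rpow] at h'
  rwa [Real.coe_toNNReal x hx, Real.coe_toNNReal y hy] at h'

lemma key_estimate (p : ℝ) (hp : 2 < p) (v : Plane → ℝ) (hv : ContDiff ℝ 1 v)
    (θ R : ℝ) (hR : 1 ≤ R)
    (hint : IntegrableOn
      (fun r : ℝ => r * ‖fderiv ℝ v (pt (r * Real.cos θ) (r * Real.sin θ))‖ ^ p)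
      (Ioi (0:ℝ))) :
    |v (pt (R * Real.cos θ) (R * Real.sin θ))| ^ p ≤
      2 ^ (p-1) * |v (pt (Real.cos θ) (Real.sin θ))| ^ p +
      (2 ^ (p-1) * ((p-2)/(p-1)) ^ (1-p)) * R ^ (p-2) *
        ∫ r in Ioi (0:ℝ), r * ‖fderiv ℝ v (pt (r * Real.cos θ) (r * Real.sin θ))‖ ^ p := by
  have hp1 : (1:ℝ) < p := by linarith
  have hp0 : (0:ℝ) < p := by linarith
  set q : ℝ := p / (p - 1) with hq
  have hpq : p.HolderConjugate q := Real.HolderConjugate.conjExponent hp1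
  set G : Plane → ℝ := fun x => ‖fderiv ℝ v x‖ with hGdef
  have hG : Continuous G := (hv.continuous_fderiv one_ne_zero).norm
  set u : Plane := pt (Real.cos θ) (Real.sin θ) with hu_def
  have hu : ‖u‖ = 1 := norm_pt_cos_sin θ
  have hsm : ∀ r : ℝ, pt (r * Real.cos θ) (r * Real.sin θ) = r • u := fun r =>
    (pt_smul r _ _).symm
  set φ : ℝ → ℝ := fun r => v (r • u) with hφ
  -- derivative
  have hd : ∀ r : ℝ, HasDerivAt φ (fderiv ℝ v (r • u) u) r := by
    intro r
    have h1 : HasDerivAt (fun s : ℝ => s • u) u r := by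
      simpa using (hasDerivAt_id r).smul_const u
    exact (((hv.differentiable one_ne_zero) (r • u)).hasFDerivAt).comp_hasDerivAt r h1
  have hcont_ru : Continuous fun r : ℝ => r • u := continuous_id.smul continuous_const
  have hcontd : Continuous fun r : ℝ => fderiv ℝ v (r • u) u := by
    exact (((hv.continuous_fderiv one_ne_zero).comp hcont_ru).clm_apply continuous_const)
  have hFTC : φ R - φ 1 = ∫ r in (1:ℝ)..R, fderiv ℝ v (r • u) u := by
    rw [intervalIntegral.integral_eq_sub_of_hasDerivAt (fun r _ => hd r)
      (hcontd.intervalIntegrable 1 R)]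
  set A : ℝ := ∫ r in (1:ℝ)..R, G (r • u) with hA
  have hGu_cont : Continuous fun r : ℝ => G (r • u) := hG.comp hcont_ru
  have hA0 : 0 ≤ A := intervalIntegral.integral_nonneg hR (fun r _ => norm_nonneg _)
  have hA1 : |φ R| ≤ |φ 1| + A := by
    have h2 : |φ R - φ 1| ≤ A := by
      rw [hFTC]
      calc |∫ r in (1:ℝ)..R, fderiv ℝ v (r • u) u|
          ≤ ∫ r in (1:ℝ)..R, |fderiv ℝ v (r • u) u| :=
            intervalIntegral.abs_integral_le_integral_abs hR
        _ ≤ A := by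
            apply intervalIntegral.integral_mono_on hR
              (hcontd.abs.intervalIntegrable 1 R) (hGu_cont.intervalIntegrable 1 R)
            intro x _
            calc |fderiv ℝ v (x • u) u| ≤ ‖fderiv ℝ v (x • u)‖ * ‖u‖ :=
                  (fderiv ℝ v (x • u)).le_opNorm u
              _ = G (x • u) := by rw [hu, mul_one]
    calc |φ R| = |φ 1 + (φ R - φ 1)| := by ring_nf
      _ ≤ |φ 1| + |φ R - φ 1| := abs_add_le _ _
      _ ≤ |φ 1| + A := by linarith
  -- Hölder
  set μ : Measure ℝ := volume.restrict (Ioc 1 R) with hμ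
  haveI : IsFiniteMeasure μ := by
    constructor
    rw [hμ, Measure.restrict_apply_univ]
    exact measure_Ioc_lt_top
  set f : ℝ → ℝ := fun r => G (r • u) * r ^ (1/p) with hfdef
  set g : ℝ → ℝ := fun r => r ^ (-(1/p)) with hgdef
  set X : ℝ := ∫ r in Ioc (1:ℝ) R, r * G (pt (r * Real.cos θ) (r * Real.sin θ)) ^ p with hXdef
  set Y : ℝ := ∫ r in Ioc (1:ℝ) R, r ^ (-(1/(p-1))) with hYdef
  set K : ℝ := ∫ r in Ioi (0:ℝ),
      r * ‖fderiv ℝ v (pt (r * Real.cos θ) (r * Real.sin θ))‖ ^ p with hKdef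
  have hf_cont : Continuous f := by
    apply hGu_cont.mul
    exact continuous_id.rpow_const (fun x => Or.inr (by positivity))
  have hfm : MemLp f (ENNReal.ofReal p) μ := by
    obtain ⟨Cf, hCf⟩ := (isCompact_Icc (a := (1:ℝ)) (b := R)).exists_bound_of_continuousOn
      hf_cont.continuousOn
    refine MemLp.of_bound hf_cont.aestronglyMeasurable.restrict Cf ?_
    filter_upwards [ae_restrict_mem measurableSet_Ioc] with r hr
    exact hCf r (Ioc_subset_Icc_self hr)
  have hg_contOn : ContinuousOn g (Ioc 1 R) := by
    intro r hr
    have hr0 : r ≠ 0 := by have := hr.1; intro h; rw [h] at this; linarith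
    exact (Real.continuousAt_rpow_const r _ (Or.inl hr0)).continuousWithinAt
  have hgm : MemLp g (ENNReal.ofReal q) μ := by
    refine MemLp.of_bound (hg_contOn.aestronglyMeasurable measurableSet_Ioc) 1 ?_
    filter_upwards [ae_restrict_mem measurableSet_Ioc] with r hr
    have hr1 : (1:ℝ) ≤ r := hr.1.le
    rw [Real.norm_eq_abs, abs_of_nonneg (Real.rpow_nonneg (by linarith) _)]
    exact Real.rpow_le_one_of_one_le_of_nonpos hr1 (neg_nonpos.2 (by positivity))
  have hf0 : 0 ≤ᵐ[μ] f := by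
    filter_upwards [ae_restrict_mem measurableSet_Ioc] with r hr
    exact mul_nonneg (norm_nonneg _) (Real.rpow_nonneg (by linarith [hr.1]) _)
  have hg0 : 0 ≤ᵐ[μ] g := by
    filter_upwards [ae_restrict_mem measurableSet_Ioc] with r hr
    exact Real.rpow_nonneg (by linarith [hr.1]) _
  have hHold := MeasureTheory.integral_mul_le_Lp_mul_Lq_of_nonneg hpq hf0 hg0 hfm hgm
  have hAeq : A = ∫ a, f a * g a ∂μ := by
    rw [hA, intervalIntegral.integral_of_le hR, hμ]
    apply setIntegral_congr_fun measurableSet_Ioc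
    intro r hr
    have hr0 : (0:ℝ) < r := lt_trans one_pos hr.1
    rw [hfdef, hgdef]
    dsimp only
    rw [mul_assoc, ← Real.rpow_add hr0, add_neg_cancel, Real.rpow_zero, mul_one]
  have hfp : ∫ a, f a ^ p ∂μ = X := by
    rw [hXdef, hμ]
    apply setIntegral_congr_fun measurableSet_Ioc
    intro r hr
    have hr0 : (0:ℝ) < r := lt_trans one_pos hr.1
    rw [hfdef]
    dsimp only
    rw [Real.mul_rpow (norm_nonneg _) (Real.rpow_nonneg hr0.le _),
      ← Real.rpow_mul hr0.le, one_div_mul_cancel hp0.ne', Real.rpow_one, hsm r, mul_comm]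
  have hgq : ∫ a, g a ^ q ∂μ = Y := by
    rw [hYdef, hμ]
    apply setIntegral_congr_fun measurableSet_Ioc
    intro r hr
    have hr0 : (0:ℝ) < r := lt_trans one_pos hr.1
    rw [hgdef]
    dsimp only
    rw [← Real.rpow_mul hr0.le]
    congr 1
    rw [hq]
    field_simp
  have hpm1 : p - 1 ≠ 0 := sub_ne_zero.2 (by linarith)
  set c : ℝ := (p-2)/(p-1) with hc
  have hc0 : 0 < c := by apply div_pos <;> linarith
  have hRc1 : (1:ℝ) ≤ R ^ c := by
    calc (1:ℝ) = 1 ^ c := (Real.one_rpow c).symm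
      _ ≤ R ^ c := Real.rpow_le_rpow zero_le_one hR hc0.le
  have hYval : Y = (R ^ c - 1)/c := by
    have hlt : (-1:ℝ) < -(1/(p-1)) := by
      have : 1/(p-1) < 1 := by
        rw [div_lt_one (by linarith)]
        linarith
      linarith
    rw [hYdef, ← intervalIntegral.integral_of_le hR, integral_rpow (Or.inl hlt)]
    have he : -(1/(p-1)) + 1 = c := by
      rw [hc]
      field_simp
      ring
    rw [he, Real.one_rpow]
  have hYle : Y ≤ R ^ c / c := by
    rw [hYval]
    gcongr
    linarith
  have hY0 : 0 ≤ Y := by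
    rw [hYval]
    apply div_nonneg (by linarith) hc0.le
  have hX0 : 0 ≤ X := by
    apply setIntegral_nonneg measurableSet_Ioc
    intro r hr
    exact mul_nonneg (by linarith [hr.1]) (Real.rpow_nonneg (norm_nonneg _) _)
  have hK0 : 0 ≤ K := by
    apply setIntegral_nonneg measurableSet_Ioi
    intro r hr
    exact mul_nonneg (le_of_lt hr) (Real.rpow_nonneg (norm_nonneg _) _)
  have hXK : X ≤ K := by
    rw [hXdef, hKdef]
    apply setIntegral_mono_set hint
    · filter_upwards [ae_restrict_mem measurableSet_Ioi] with r hr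
      exact mul_nonneg hr.le (Real.rpow_nonneg (norm_nonneg _) _)
    · apply HasSubset.Subset.eventuallyLE
      intro r hr
      exact lt_trans zero_lt_one hr.1
  have hAX : A ≤ X ^ (1/p) * Y ^ (1/q) := by
    rw [hfp, hgq] at hHold
    exact hAeq ▸ hHold
  have hApow : A ^ p ≤ X * Y ^ (p-1) := by
    calc A ^ p ≤ (X ^ (1/p) * Y ^ (1/q)) ^ p := Real.rpow_le_rpow hA0 hAX hp0.le
      _ = (X ^ (1/p)) ^ p * (Y ^ (1/q)) ^ p :=
          Real.mul_rpow (Real.rpow_nonneg hX0 _) (Real.rpow_nonneg hY0 _)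
      _ = X * Y ^ (p-1) := by
          rw [← Real.rpow_mul hX0, ← Real.rpow_mul hY0, one_div_mul_cancel hp0.ne',
            Real.rpow_one]
          congr 1
          rw [hq]
          field_simp
  have hYp : Y ^ (p-1) ≤ R ^ (p-2) * c ^ (1-p) := by
    calc Y ^ (p-1) ≤ (R ^ c / c) ^ (p-1) := Real.rpow_le_rpow hY0 hYle (by linarith)
      _ = (R ^ c) ^ (p-1) / c ^ (p-1) :=
          Real.div_rpow (Real.rpow_nonneg (by linarith) _) hc0.le _
      _ = R ^ (p-2) * c ^ (1-p) := by
          rw [← Real.rpow_mul (by linarith : (0:ℝ) ≤ R)]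
          have hcp : c * (p-1) = p - 2 := by
            rw [hc, div_mul_eq_mul_div, mul_div_assoc, div_self hpm1, mul_one]
          rw [hcp, div_eq_mul_inv, ← Real.rpow_neg hc0.le, neg_sub]
  have hφR : |φ R| ^ p ≤ 2^(p-1) * |φ 1| ^ p + 2^(p-1) * (X * Y ^ (p-1)) := by
    have h2 : (0:ℝ) < 2 ^ (p-1) := Real.rpow_pos_of_pos two_pos _
    calc |φ R| ^ p ≤ (|φ 1| + A) ^ p := Real.rpow_le_rpow (abs_nonneg _) hA1 hp0.le
      _ ≤ 2^(p-1) * (|φ 1|^p + A^p) := two_rpow_bound hp1.le (abs_nonneg _) hA0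
      _ ≤ _ := by
          rw [mul_add]
          gcongr
  have hfin : X * Y ^ (p-1) ≤ K * (R ^ (p-2) * c ^ (1-p)) :=
    mul_le_mul hXK hYp (Real.rpow_nonneg hY0 _) hK0
  have h2 : (0:ℝ) < 2 ^ (p-1) := Real.rpow_pos_of_pos two_pos _
  have hL : |v (pt (R * Real.cos θ) (R * Real.sin θ))| = |φ R| := by rw [hsm R]
  have hL1 : |v (pt (Real.cos θ) (Real.sin θ))| = |φ 1| := by
    rw [hφ]
    simp only [one_smul]
    rfl
  rw [hL, hL1]
  calc |φ R| ^ p ≤ 2^(p-1) * |φ 1| ^ p + 2^(p-1) * (X * Y ^ (p-1)) := hφR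
    _ ≤ 2^(p-1) * |φ 1| ^ p + 2^(p-1) * (K * (R ^ (p-2) * c ^ (1-p))) := by
        gcongr
    _ = 2^(p-1) * |φ 1| ^ p + (2^(p-1) * c ^ (1-p)) * R ^ (p-2) * K := by ring
def Temb : (ℝ × ℝ) ≃ᵐ Plane :=
  (MeasurableEquiv.finTwoArrow (α := ℝ)).symm.trans
    (MeasurableEquiv.toLp 2 (Fin 2 → ℝ))

lemma Temb_apply (a b : ℝ) : Temb (a, b) = pt a b := by
  ext i
  fin_cases i <;> rfl

lemma Temb_mp : MeasurePreserving Temb volume volume :=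
  ((EuclideanSpace.volume_preserving_symm_measurableEquiv_toLp (Fin 2)).symm).comp
    ((volume_preserving_finTwoArrow ℝ).symm _)

lemma integrableOn_polar {W : ℝ × ℝ → ℝ} (hW : Integrable W volume) :
    IntegrableOn (fun s : ℝ × ℝ => s.1 * W (polarCoord.symm s)) polarCoord.target := by
  set B : ℝ × ℝ → ℝ × ℝ →L[ℝ] ℝ × ℝ := fun p =>
    LinearMap.toContinuousLinearMap (Matrix.toLin (Module.Basis.finTwoProd ℝ) (Module.Basis.finTwoProd ℝ)
      !![Real.cos p.2, -p.1 * Real.sin p.2; Real.sin p.2, p.1 * Real.cos p.2]) with hB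
  have A : ∀ p ∈ polarCoord.target, HasFDerivWithinAt polarCoord.symm (B p) polarCoord.target p :=
    fun p _ => (hasFDerivAt_polarCoord_symm p).hasFDerivWithinAt
  have B_det : ∀ p : ℝ × ℝ, (B p).det = p.1 := by
    intro p
    conv_rhs => rw [← one_mul p.1, ← Real.cos_sq_add_sin_sq p.2]
    simp only [hB, neg_mul, LinearMap.det_toContinuousLinearMap, LinearMap.det_toLin,
      Matrix.det_fin_two_of, sub_neg_eq_add]
    ring
  have hinj : Set.InjOn polarCoord.symm polarCoord.target := polarCoord.symm.injOn
  have himg : polarCoord.symm '' polarCoord.target = polarCoord.source := by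
    rw [← polarCoord.symm_source]
    exact polarCoord.symm.image_source_eq_target
  have h1 : IntegrableOn W (polarCoord.symm '' polarCoord.target) volume := by
    rw [himg]; exact hW.integrableOn
  rw [integrableOn_image_iff_integrableOn_abs_det_fderiv_smul volume
    polarCoord.open_target.measurableSet A hinj W] at h1
  refine h1.congr_fun (fun x hx => ?_) polarCoord.open_target.measurableSet
  dsimp only
  rw [B_det, abs_of_pos hx.1]
  rfl

lemma continuous_pt_circle (R : ℝ) :
    Continuous fun θ : ℝ => pt (R * Real.cos θ) (R * Real.sin θ) := by
  have h : (fun θ : ℝ => pt (R * Real.cos θ) (R * Real.sin θ)) =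
      fun θ : ℝ => (R * Real.cos θ) • pt 1 0 + (R * Real.sin θ) • pt 0 1 := by
    funext θ
    ext i
    fin_cases i <;> simp [pt]
  rw [h]
  exact ((continuous_const.mul Real.continuous_cos).smul continuous_const).add
    ((continuous_const.mul Real.continuous_sin).smul continuous_const)

/-- if `v ∈ C¹(ℝ²)` and `∫_{ℝ²} |∇v|^p dx < ∞` for some
`p ∈ (2,∞)`, then `sup_{R ≥ 1} R^{2-p} ∫_0^{2π} |v(R cos θ, R sin θ)|^p dθ < ∞`. -/
theorem circle_integral_bound_super (p : ℝ) (hp : 2 < p)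
    (v : Plane → ℝ) (hv : ContDiff ℝ 1 v)
    (henergy : ∫⁻ x : Plane, ENNReal.ofReal (‖fderiv ℝ v x‖ ^ p) < ⊤) :
    ∃ C : ℝ, ∀ R : ℝ, 1 ≤ R →
      R ^ (2 - p) *
        (∫ θ in (0 : ℝ)..(2 * π), |v (pt (R * Real.cos θ) (R * Real.sin θ))| ^ p)
        ≤ C := by
  have hp1 : (1:ℝ) < p := by linarith
  have hp0 : (0:ℝ) < p := by linarith
  have hG : Continuous fun x : Plane => ‖fderiv ℝ v x‖ := (hv.continuous_fderiv one_ne_zero).norm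
  have hGp_cont : Continuous fun x : Plane => ‖fderiv ℝ v x‖ ^ p :=
    hG.rpow_const (fun x => Or.inr hp0.le)
  have hGp_int : Integrable (fun x : Plane => ‖fderiv ℝ v x‖ ^ p) volume := by
    refine ⟨hGp_cont.aestronglyMeasurable, ?_⟩
    rw [hasFiniteIntegral_iff_ofReal
      (Filter.Eventually.of_forall fun x => Real.rpow_nonneg (norm_nonneg _) _)]
    exact henergy
  set W : ℝ × ℝ → ℝ := fun s => ‖fderiv ℝ v (pt s.1 s.2)‖ ^ p with hWdef
  have hW_int : Integrable W volume := by
    have hWc : W = (fun x : Plane => ‖fderiv ℝ v x‖ ^ p) ∘ ⇑Temb := by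
      funext s
      rw [Function.comp_apply, hWdef]
      dsimp only
      rw [show Temb s = pt s.1 s.2 from Temb_apply s.1 s.2]
    rw [hWc]
    exact (Temb_mp.integrable_comp_emb Temb.measurableEmbedding).2 hGp_int
  set E : ℝ := ∫ s : ℝ × ℝ, W s with hE
  set P : ℝ × ℝ → ℝ := fun s => s.1 * W (polarCoord.symm s) with hPdef
  have hP : Integrable P ((volume.restrict (Set.Ioi (0:ℝ))).prod
      (volume.restrict (Set.Ioo (-π) π))) := by
    rw [Measure.prod_restrict, ← Measure.volume_eq_prod, ← polarCoord_target]
    exact integrableOn_polar hW_int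
  set K : ℝ → ℝ := fun θ => ∫ r in Set.Ioi (0:ℝ), P (r, θ) with hKdef
  have hK_int : Integrable K (volume.restrict (Set.Ioo (-π) π)) := hP.integral_prod_right
  have hfiber : ∀ᵐ θ ∂(volume.restrict (Set.Ioo (-π) π)),
      Integrable (fun r => P (r, θ)) (volume.restrict (Set.Ioi (0:ℝ))) := hP.prod_left_ae
  have hval : ∫ θ in Set.Ioo (-π) π, K θ = E := by
    have hP' : Integrable (Function.uncurry (fun r θ => P (r, θ)))
        ((volume.restrict (Set.Ioi (0:ℝ))).prod (volume.restrict (Set.Ioo (-π) π))) := hP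
    rw [hKdef]
    rw [← MeasureTheory.integral_integral_swap hP', MeasureTheory.integral_integral hP']
    rw [Measure.prod_restrict, ← Measure.volume_eq_prod, ← polarCoord_target]
    rw [hE, ← integral_comp_polarCoord_symm W]
    rfl
  have hK_nonneg : ∀ θ, 0 ≤ K θ := by
    intro θ
    apply setIntegral_nonneg measurableSet_Ioi
    intro r hr
    exact mul_nonneg (le_of_lt hr) (Real.rpow_nonneg (norm_nonneg _) _)
  have hpi : (0:ℝ) < π := Real.pi_pos
  set C₁ : ℝ := ∫ θ in (-π)..π, |v (pt (Real.cos θ) (Real.sin θ))| ^ p with hC₁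
  have hC₁0 : 0 ≤ C₁ :=
    intervalIntegral.integral_nonneg (by linarith)
      (fun θ _ => Real.rpow_nonneg (abs_nonneg _) _)
  have hE0 : 0 ≤ E := by
    rw [← hval]
    apply setIntegral_nonneg measurableSet_Ioo
    exact fun θ _ => hK_nonneg θ
  set c2 : ℝ := 2 ^ (p-1) * ((p-2)/(p-1)) ^ (1-p) with hc2
  have hc20 : 0 < c2 := by
    apply mul_pos (Real.rpow_pos_of_pos two_pos _)
    exact Real.rpow_pos_of_pos (div_pos (by linarith) (by linarith)) _
  refine ⟨2 ^ (p-1) * C₁ + c2 * E, fun R hR => ?_⟩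
  have hR0 : (0:ℝ) < R := lt_of_lt_of_le one_pos hR
  -- continuity of the circle integrands
  have hFv_cont : Continuous fun θ : ℝ => |v (pt (R * Real.cos θ) (R * Real.sin θ))| ^ p :=
    ((hv.continuous.comp (continuous_pt_circle R)).abs).rpow_const (fun x => Or.inr hp0.le)
  have hF1_cont : Continuous fun θ : ℝ => |v (pt (Real.cos θ) (Real.sin θ))| ^ p := by
    have h := ((hv.continuous.comp (continuous_pt_circle 1)).abs).rpow_const
      (fun x : ℝ => Or.inr hp0.le)
    simpa using h
  -- step 1 : periodicity
  have hper : Function.Periodic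
      (fun θ : ℝ => |v (pt (R * Real.cos θ) (R * Real.sin θ))| ^ p) (2 * π) := by
    intro x
    simp only [Real.cos_add_two_pi, Real.sin_add_two_pi]
  have h1 : (∫ θ in (0:ℝ)..(2*π), |v (pt (R * Real.cos θ) (R * Real.sin θ))| ^ p) =
      ∫ θ in (-π)..π, |v (pt (R * Real.cos θ) (R * Real.sin θ))| ^ p := by
    have h := hper.intervalIntegral_add_eq 0 (-π)
    rw [zero_add] at h
    rw [h, show -π + 2*π = π by ring]
  -- step 2 : pointwise bound a.e.
  have hfiber' : ∀ᵐ θ ∂(volume.restrict (Set.Icc (-π) π)),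
      Integrable (fun r => P (r, θ)) (volume.restrict (Set.Ioi (0:ℝ))) := by
    rwa [← Measure.restrict_congr_set Ioo_ae_eq_Icc]
  have hae : ∀ᵐ θ ∂(volume.restrict (Set.Icc (-π) π)),
      |v (pt (R * Real.cos θ) (R * Real.sin θ))| ^ p ≤
        2 ^ (p-1) * |v (pt (Real.cos θ) (Real.sin θ))| ^ p + c2 * R ^ (p-2) * K θ := by
    filter_upwards [hfiber'] with θ hθ
    have hkey := key_estimate p hp v hv θ R hR hθ
    calc |v (pt (R * Real.cos θ) (R * Real.sin θ))| ^ p ≤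
        2 ^ (p-1) * |v (pt (Real.cos θ) (Real.sin θ))| ^ p +
          (2 ^ (p-1) * ((p-2)/(p-1)) ^ (1-p)) * R ^ (p-2) *
            ∫ r in Set.Ioi (0:ℝ), r * ‖fderiv ℝ v (pt (r * Real.cos θ) (r * Real.sin θ))‖ ^ p :=
          hkey
      _ = 2 ^ (p-1) * |v (pt (Real.cos θ) (Real.sin θ))| ^ p + c2 * R ^ (p-2) * K θ := rfl
  -- interval integrability
  have hK_ii : IntervalIntegrable K volume (-π) π := by
    rw [intervalIntegrable_iff_integrableOn_Ioo_of_le (by linarith)]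
    exact hK_int
  have hb_ii : IntervalIntegrable
      (fun θ => 2 ^ (p-1) * |v (pt (Real.cos θ) (Real.sin θ))| ^ p + c2 * R ^ (p-2) * K θ)
      volume (-π) π :=
    ((continuous_const.mul hF1_cont).intervalIntegrable _ _).add ((hK_ii.const_mul _))
  have h2 : (∫ θ in (-π)..π, |v (pt (R * Real.cos θ) (R * Real.sin θ))| ^ p) ≤
      ∫ θ in (-π)..π,
        (2 ^ (p-1) * |v (pt (Real.cos θ) (Real.sin θ))| ^ p + c2 * R ^ (p-2) * K θ) :=
    intervalIntegral.integral_mono_ae_restrict (by linarith)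
      (hFv_cont.intervalIntegrable _ _) hb_ii hae
  have hKval : (∫ θ in (-π)..π, K θ) = E := by
    rw [intervalIntegral.integral_of_le (by linarith)]
    rw [← setIntegral_congr_set Ioo_ae_eq_Ioc]
    exact hval
  have h3 : (∫ θ in (-π)..π,
      (2 ^ (p-1) * |v (pt (Real.cos θ) (Real.sin θ))| ^ p + c2 * R ^ (p-2) * K θ)) =
      2 ^ (p-1) * C₁ + c2 * R ^ (p-2) * E := by
    rw [intervalIntegral.integral_add ((hF1_cont.intervalIntegrable _ _).const_mul _)
      (hK_ii.const_mul _), intervalIntegral.integral_const_mul,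
      intervalIntegral.integral_const_mul, hKval, hC₁]
  -- final arithmetic
  have hRle1 : R ^ (2-p) ≤ 1 := Real.rpow_le_one_of_one_le_of_nonpos hR (by linarith)
  have hRpos : (0:ℝ) < R ^ (2-p) := Real.rpow_pos_of_pos hR0 _
  have hcancel : R ^ (2-p) * R ^ (p-2) = 1 := by
    rw [← Real.rpow_add hR0]
    norm_num
  calc R ^ (2-p) * (∫ θ in (0:ℝ)..(2*π), |v (pt (R * Real.cos θ) (R * Real.sin θ))| ^ p)
      = R ^ (2-p) * ∫ θ in (-π)..π, |v (pt (R * Real.cos θ) (R * Real.sin θ))| ^ p := by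
        rw [h1]
    _ ≤ R ^ (2-p) * (2 ^ (p-1) * C₁ + c2 * R ^ (p-2) * E) := by
        apply mul_le_mul_of_nonneg_left _ hRpos.le
        rw [← h3]
        exact h2
    _ = R ^ (2-p) * (2 ^ (p-1) * C₁) + c2 * (R ^ (2-p) * R ^ (p-2)) * E := by ring
    _ ≤ 2 ^ (p-1) * C₁ + c2 * E := by
        rw [hcancel, mul_one]
        have : R ^ (2-p) * (2 ^ (p-1) * C₁) ≤ 1 * (2 ^ (p-1) * C₁) := by
          apply mul_le_mul_of_nonneg_right hRle1
          positivity
        linarith
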